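/- arXiv:2305.11758 — 4 statements merged into one kernel-verified Lean document; each statement's English description precedes it below -/
import Mathlib

section
/- Uniqueness direction of Theorem 1: if a categorized choice rule C satisfies the over-and-above principle, within-category fairness, and quota-filling subject to eligibility, then for every set of applicants A, C^o(A) = C^OA,o(A) and C^r(A) = C^OA,r(A) for every r ∈ R; in particular C coincides with the over-and-above choice rule C^OA. -/
open Finset

variable {α : Type*} [Fintype α] [DecidableEq α] [LinearOrder α]
variable {ρ : Type*} [Fintype ρ] [DecidableEq ρ]

/-- The top-`k` elements of `A` under the linear (merit) order on `α`, where
higher means more meritorious: the members of `A` that have fewer than `k`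
strictly higher-ranked elements in `A`.  If `|A| ≤ k` this is all of `A`. -/
def topk (k : ℕ) (A : Finset α) : Finset α :=
  A.filter fun i => (A.filter fun j => i < j).card < k

/-- Open-category selection of the over-and-above choice rule: the
`min(qo, |A ∩ acc|)` highest-ranked acceptable applicants. -/
def oaOpen (acc : Finset α) (qo : ℕ) (A : Finset α) : Finset α :=
  topk qo (A ∩ acc)

/-- Reserve-category-`r` selection of the over-and-above choice rule: the
`q r` highest-ranked acceptable type-`r` applicants not selected for the
open category. -/
def oaRes (acc : Finset α) (t : α → Option ρ) (qo : ℕ) (q : ρ → ℕ) (r : ρ)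
    (A : Finset α) : Finset α :=
  topk (q r) (((A ∩ acc) \ oaOpen acc qo A).filter fun i => t i = some r)

/-- The set of applicants chosen by the over-and-above choice rule. -/
def oaChosen (acc : Finset α) (t : α → Option ρ) (qo : ℕ) (q : ρ → ℕ)
    (A : Finset α) : Finset α :=
  oaOpen acc qo A ∪ Finset.univ.biUnion fun r => oaRes acc t qo q r A

/-- The over-and-above choice rule, by category (`none` is the open category,
`some r` is reserve category `r`). -/
def oaSel (acc : Finset α) (t : α → Option ρ) (qo : ℕ) (q : ρ → ℕ) :
    Option ρ → Finset α → Finset α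
  | none => oaOpen acc qo
  | some r => oaRes acc t qo q r

/-- A categorized choice rule: for each set of applicants it selects a
pairwise-disjoint family consisting of an open-category selection (acceptable
applicants, at most `qo` of them) and, for each reserve category `r`, a
category-`r` selection (acceptable type-`r` applicants, at most `q r`). -/
structure CatChoice (acc : Finset α) (t : α → Option ρ) (qo : ℕ) (q : ρ → ℕ) where
  sel : Option ρ → Finset α → Finset α
  sel_open_subset : ∀ A : Finset α, sel none A ⊆ A ∩ acc
  sel_open_card : ∀ A : Finset α, (sel none A).card ≤ qo
  sel_res_subset : ∀ (r : ρ) (A : Finset α),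
    sel (some r) A ⊆ (A ∩ acc).filter fun i => t i = some r
  sel_res_card : ∀ (r : ρ) (A : Finset α), (sel (some r) A).card ≤ q r
  sel_disjoint : ∀ c c' : Option ρ, c ≠ c' → ∀ A : Finset α,
    Disjoint (sel c A) (sel c' A)

/-- The chosen set of a categorized choice rule. -/
def CatChoice.chosen {acc : Finset α} {t : α → Option ρ} {qo : ℕ} {q : ρ → ℕ}
    (C : CatChoice acc t qo q) (A : Finset α) : Finset α :=
  Finset.univ.biUnion fun c : Option ρ => C.sel c A

/-- Over-and-above principle: every acceptable applicant whose rank among the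
acceptable applicants of `A` is at most `qo` is selected for an open-category
position. -/
def OverAndAbovePrinciple {acc : Finset α} {t : α → Option ρ} {qo : ℕ} {q : ρ → ℕ}
    (C : CatChoice acc t qo q) : Prop :=
  ∀ A : Finset α, ∀ i ∈ A ∩ acc,
    ((A ∩ acc).filter fun j => i < j).card < qo → i ∈ C.sel none A

/-- Within-category fairness: among acceptable applicants of the same
category, if a lower-merit one is chosen then so is a higher-merit one. -/
def WithinCategoryFair {acc : Finset α} {t : α → Option ρ} {qo : ℕ} {q : ρ → ℕ}
    (C : CatChoice acc t qo q) : Prop :=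
  ∀ A : Finset α, ∀ i ∈ A, ∀ j ∈ A, i ∈ acc → j ∈ acc → t i = t j → j < i →
    j ∈ C.chosen A → i ∈ C.chosen A

/-- Quota-filling subject to eligibility: if an acceptable reserve-category-`r`
applicant is left unchosen, then all `q r` category-`r` positions are filled. -/
def QuotaFilling {acc : Finset α} {t : α → Option ρ} {qo : ℕ} {q : ρ → ℕ}
    (C : CatChoice acc t qo q) : Prop :=
  ∀ A : Finset α, ∀ i ∈ A, i ∈ acc → ∀ r : ρ, t i = some r → i ∉ C.chosen A →
    (C.sel (some r) A).card = q r

lemma rankfun_lt {A : Finset α} {i j : α} (hi : i ∈ A) (hj : j ∈ A) (h : j < i) :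
    (A.filter fun x => i < x).card < (A.filter fun x => j < x).card := by
  apply Finset.card_lt_card
  rw [Finset.ssubset_iff_of_subset]
  · exact ⟨i, mem_filter.mpr ⟨hi, h⟩, by simp⟩
  · intro x hx
    rw [mem_filter] at *
    exact ⟨hx.1, h.trans hx.2⟩

lemma card_topk (k : ℕ) (A : Finset α) : (topk k A).card = min k A.card := by
  classical
  set f : α → ℕ := fun i => (A.filter fun j => i < j).card with hf
  have hinj : Set.InjOn f A := by
    intro i hi j hj h
    by_contra hne
    rcases lt_or_gt_of_ne hne with hlt | hlt
    · exact (rankfun_lt hj hi hlt).ne' h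
    · exact (rankfun_lt hi hj hlt).ne h
  have hlt_card : ∀ i ∈ A, f i < A.card := by
    intro i hi
    have hsub : (A.filter fun j => i < j) ⊆ A.erase i := by
      intro x hx
      rw [mem_filter] at hx
      exact mem_erase.mpr ⟨(hx.2).ne', hx.1⟩
    calc f i ≤ (A.erase i).card := card_le_card hsub
      _ < A.card := card_erase_lt_of_mem hi
  have himg : A.image f = range A.card := by
    apply eq_of_subset_of_card_le
    · intro n hn
      rcases mem_image.mp hn with ⟨i, hi, rfl⟩
      exact mem_range.mpr (hlt_card i hi)
    · rw [card_range, card_image_of_injOn hinj]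
  have h1 : (topk k A).card = ((topk k A).image f).card := by
    rw [card_image_of_injOn (hinj.mono (by exact_mod_cast filter_subset _ _))]
  have h2 : (topk k A).image f = (A.image f).filter (· < k) := by
    ext n
    simp only [mem_image, mem_filter, topk]
    constructor
    · rintro ⟨i, hi, rfl⟩
      exact ⟨⟨i, hi.1, rfl⟩, hi.2⟩
    · rintro ⟨⟨i, hi, rfl⟩, hn⟩
      exact ⟨i, ⟨hi, hn⟩, rfl⟩
  have h3 : (range A.card).filter (· < k) = range (min k A.card) := by
    ext n
    simp only [mem_filter, mem_range, lt_min_iff]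
    tauto
  rw [h1, h2, himg, h3, card_range]

lemma topk_eq_self {k : ℕ} {A : Finset α} (h : A.card ≤ k) : topk k A = A := by
  exact eq_of_subset_of_card_le (filter_subset _ _)
    (le_of_eq ((card_topk k A).trans (min_eq_right h)).symm)

/-- uniqueness direction of Theorem 1. If a categorized
choice rule satisfies the over-and-above principle, within-category fairness,
and quota-filling subject to eligibility, then it coincides with the
over-and-above choice rule, category by category. -/
theorem uniqueness_of_over_and_above_rule
    (acc : Finset α) (t : α → Option ρ) (qo : ℕ) (q : ρ → ℕ)
    (C : CatChoice acc t qo q)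
    (hOA : OverAndAbovePrinciple C) (hWCF : WithinCategoryFair C)
    (hQF : QuotaFilling C) :
    ∀ (A : Finset α) (c : Option ρ), C.sel c A = oaSel acc t qo q c A := by
  intro A c
  have hopen : C.sel none A = oaOpen acc qo A := by
    have hsub : oaOpen acc qo A ⊆ C.sel none A := by
      intro i hi
      rw [oaOpen, topk, mem_filter] at hi
      exact hOA A i hi.1 hi.2
    have hcard : (C.sel none A).card ≤ (oaOpen acc qo A).card := by
      rw [oaOpen, card_topk]
      exact le_min (C.sel_open_card A) (card_le_card (C.sel_open_subset A))
    exact (eq_of_subset_of_card_le hsub hcard).symm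
  cases c with
  | none => exact hopen
  | some r =>
    show C.sel (some r) A = oaRes acc t qo q r A
    set B := ((A ∩ acc) \ oaOpen acc qo A).filter (fun i => t i = some r) with hB
    have hresB : oaRes acc t qo q r A = topk (q r) B := rfl
    have hBmem : ∀ i ∈ B, i ∈ A ∧ i ∈ acc ∧ t i = some r := by
      intro i hi
      rw [hB, mem_filter, mem_sdiff, mem_inter] at hi
      exact ⟨hi.1.1.1, hi.1.1.2, hi.2⟩
    have hselB : C.sel (some r) A ⊆ B := by
      intro i hi
      have h1 := C.sel_res_subset r A hi
      rw [mem_filter] at h1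
      rw [hB, mem_filter, mem_sdiff]
      refine ⟨⟨h1.1, ?_⟩, h1.2⟩
      rw [← hopen]
      intro hcontra
      exact (Finset.disjoint_left.mp
        (C.sel_disjoint (some r) none (by simp) A)) hi hcontra
    have hnotchosen : ∀ i ∈ B, i ∉ C.sel (some r) A → i ∉ C.chosen A := by
      intro i hi hns hc
      rw [CatChoice.chosen, mem_biUnion] at hc
      obtain ⟨c, -, hc⟩ := hc
      match c with
      | none =>
        rw [hopen] at hc
        rw [hB, mem_filter, mem_sdiff] at hi
        exact hi.1.2 hc
      | some r' =>
        have h1 := C.sel_res_subset r' A hc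
        rw [mem_filter] at h1
        have h2 := (hBmem i hi).2.2
        rw [h2] at h1
        have : r = r' := Option.some.inj h1.2
        subst this
        exact hns hc
    rcases le_or_gt B.card (q r) with hle | hlt
    · -- all of B is selected
      rw [hresB, topk_eq_self hle]
      refine (Finset.Subset.antisymm hselB ?_)
      intro i hi
      by_contra hns
      obtain ⟨hiA, hiacc, hit⟩ := hBmem i hi
      have hcard := hQF A i hiA hiacc r hit (hnotchosen i hi hns)
      have hssub : C.sel (some r) A ⊂ B :=
        (Finset.ssubset_iff_of_subset hselB).mpr ⟨i, hi, hns⟩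
      have := card_lt_card hssub
      omega
    · have hcardtopk : (topk (q r) B).card = q r := by
        rw [card_topk, min_eq_left hlt.le]
      have hsub : topk (q r) B ⊆ C.sel (some r) A := by
        by_contra hns
        obtain ⟨i, hitop, hisel⟩ := Finset.not_subset.mp hns
        have hiB : i ∈ B := filter_subset _ _ hitop
        obtain ⟨hiA, hiacc, hit⟩ := hBmem i hiB
        have hinc : i ∉ C.chosen A := hnotchosen i hiB hisel
        have hcard : (C.sel (some r) A).card = q r := hQF A i hiA hiacc r hit hinc
        have hnsub2 : ¬ C.sel (some r) A ⊆ topk (q r) B := by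
          intro hsub2
          have heq := eq_of_subset_of_card_le hsub2 (by rw [hcard, hcardtopk])
          rw [← heq] at hitop
          exact hisel hitop
        obtain ⟨j, hjsel, hjtop⟩ := Finset.not_subset.mp hnsub2
        have hjB : j ∈ B := hselB hjsel
        obtain ⟨hjA, hjacc, hjt⟩ := hBmem j hjB
        have hji : j < i := by
          by_contra h
          push_neg at h
          rcases h.lt_or_eq with h' | h'
          · apply hjtop
            have hflt := rankfun_lt hjB hiB h'
            rw [topk, mem_filter] at hitop ⊢
            exact ⟨hjB, hflt.trans hitop.2⟩
          · exact hjtop (h' ▸ hitop)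
        have hjch : j ∈ C.chosen A :=
          mem_biUnion.mpr ⟨some r, mem_univ _, hjsel⟩
        exact hinc (hWCF A i hiA j hjA hiacc hjacc (hit.trans hjt.symm) hji hjch)
      rw [hresB]
      exact (eq_of_subset_of_card_le hsub
        (by rw [hcardtopk]; exact C.sel_res_card r A)).symm
end

section
/- The over-and-above choice rule is substitutable: for all individuals i, j ∈ I and every set A ⊆ I \ {i, j}, if i is not in the chosen set C^OA(A ∪ {i}), then i is not in the chosen set C^OA(A ∪ {i, j}). -/
open Finset

variable {α : Type*} [Fintype α] [DecidableEq α] [LinearOrder α]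
variable {ρ : Type*} [Fintype ρ] [DecidableEq ρ]

/-- The over-and-above choice rule is substitutable: for
individuals `i, j` and a set `A ⊆ I \ {i, j}`, if `i` is not chosen from
`A ∪ {i}`, then `i` is not chosen from `A ∪ {i, j}`. -/
theorem oa_substitutable
    (acc : Finset α) (t : α → Option ρ) (qo : ℕ) (q : ρ → ℕ)
    (i j : α) (A : Finset α) (hiA : i ∉ A) (hjA : j ∉ A)
    (h : i ∉ oaChosen acc t qo q (insert i A)) :
    i ∉ oaChosen acc t qo q (insert j (insert i A)) := by
  classical
  intro hmem
  have hSS' : (insert i A) ∩ acc ⊆ (insert j (insert i A)) ∩ acc :=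
    inter_subset_inter (subset_insert _ _) Subset.rfl
  have hcard : ∀ x : α,
      (((insert i A) ∩ acc).filter fun y => x < y).card ≤
      (((insert j (insert i A)) ∩ acc).filter fun y => x < y).card :=
    fun x => card_le_card (filter_subset_filter _ hSS')
  have hopenMono : ∀ x, x ∈ (insert i A) ∩ acc → x ∉ oaOpen acc qo (insert i A) →
      x ∉ oaOpen acc qo (insert j (insert i A)) := by
    intro x hxS hx hx'
    apply hx
    simp only [oaOpen, topk, mem_filter] at hx' ⊢
    exact ⟨hxS, lt_of_le_of_lt (hcard x) hx'.2⟩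
  have hTsub : ∀ r : ρ,
      ((((insert i A) ∩ acc) \ oaOpen acc qo (insert i A)).filter
        fun x => t x = some r) ⊆
      ((((insert j (insert i A)) ∩ acc) \ oaOpen acc qo (insert j (insert i A))).filter
        fun x => t x = some r) := by
    intro r x hx
    simp only [mem_filter, mem_sdiff] at hx ⊢
    exact ⟨⟨hSS' hx.1.1, hopenMono x hx.1.1 hx.1.2⟩, hx.2⟩
  simp only [oaChosen, mem_union, mem_biUnion, mem_univ, true_and, not_or,
    not_exists] at h
  obtain ⟨hopen, hres⟩ := h
  simp only [oaChosen, mem_union, mem_biUnion, mem_univ, true_and] at hmem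
  rcases hmem with hmem | ⟨r, hmem⟩
  · -- i was chosen in the open category from the larger set
    simp only [oaOpen, topk, mem_filter] at hmem
    have hiS : i ∈ (insert i A) ∩ acc :=
      mem_inter.2 ⟨mem_insert_self _ _, (mem_inter.1 hmem.1).2⟩
    apply hopen
    simp only [oaOpen, topk, mem_filter]
    exact ⟨hiS, lt_of_le_of_lt (hcard i) hmem.2⟩
  · -- i was chosen in reserve category r from the larger set
    simp only [oaRes, topk, mem_filter, mem_sdiff] at hmem
    obtain ⟨⟨⟨hiS', hiO'⟩, hir⟩, hcnt'⟩ := hmem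
    have hiS : i ∈ (insert i A) ∩ acc :=
      mem_inter.2 ⟨mem_insert_self _ _, (mem_inter.1 hiS').2⟩
    have hiO : i ∉ oaOpen acc qo (insert i A) := hopen
    have hiT : i ∈ (((insert i A) ∩ acc) \ oaOpen acc qo (insert i A)).filter
        fun x => t x = some r := by
      simp only [mem_filter, mem_sdiff]
      exact ⟨⟨hiS, hiO⟩, hir⟩
    have hcntT :
        ¬ ((((((insert i A) ∩ acc) \ oaOpen acc qo (insert i A)).filter
          fun x => t x = some r).filter fun y => i < y).card < q r) := by
      intro hlt
      apply hres r
      simp only [oaRes, topk, mem_filter, mem_sdiff]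
      exact ⟨⟨⟨hiS, hiO⟩, hir⟩, hlt⟩
    apply hcntT
    calc (((((insert i A) ∩ acc) \ oaOpen acc qo (insert i A)).filter
          fun x => t x = some r).filter fun y => i < y).card
        ≤ (((((insert j (insert i A)) ∩ acc) \ oaOpen acc qo (insert j (insert i A))).filter
          fun x => t x = some r).filter fun y => i < y).card :=
          card_le_card (filter_subset_filter _ (hTsub r))
      _ < q r := hcnt'
end

section
/- The over-and-above choice rule is size monotonic (satisfies the law of aggregate demand): for every individual i ∈ I and every set A ⊆ I \ {i}, the number of chosen individuals satisfies |C^OA(A)| ≤ |C^OA(A ∪ {i})|. -/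
open Finset

variable {α : Type*} [Fintype α] [DecidableEq α] [LinearOrder α]
variable {ρ : Type*} [Fintype ρ] [DecidableEq ρ]

lemma topk_subset (k : ℕ) (A : Finset α) : topk k A ⊆ A := filter_subset _ _

lemma topk_card (A : Finset α) : ∀ k, (topk k A).card = min k A.card := by
  induction A using Finset.strongInduction with
  | _ A ih =>
    intro k
    rcases A.eq_empty_or_nonempty with rfl | hA
    · simp [topk]
    rcases k with _ | k
    · simp [topk]
    set m := A.max' hA with hm
    have hmA : m ∈ A := A.max'_mem hA
    have hfilter : ∀ x ∈ A, x ≠ m →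
        (A.filter fun j => x < j).card = ((A.erase m).filter fun j => x < j).card + 1 := by
      intro x hxA hxm
      have hxlt : x < m := lt_of_le_of_ne (A.le_max' x hxA) hxm
      have heq : A.filter (fun j => x < j) = insert m ((A.erase m).filter fun j => x < j) := by
        ext y
        simp only [mem_filter, mem_insert, mem_erase]
        constructor
        · rintro ⟨hyA, hxy⟩
          rcases eq_or_ne y m with rfl | hym
          · exact Or.inl rfl
          · exact Or.inr ⟨⟨hym, hyA⟩, hxy⟩
        · rintro (rfl | ⟨⟨_, hyA⟩, hxy⟩)
          · exact ⟨hmA, hxlt⟩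
          · exact ⟨hyA, hxy⟩
      rw [heq, card_insert_of_notMem (by simp)]
    have hkey : topk (k + 1) A = insert m (topk k (A.erase m)) := by
      ext x
      simp only [topk, mem_insert, mem_filter, mem_erase]
      constructor
      · rintro ⟨hxA, hcard⟩
        rcases eq_or_ne x m with rfl | hxm
        · exact Or.inl rfl
        · have := hfilter x hxA hxm
          exact Or.inr ⟨⟨hxm, hxA⟩, by omega⟩
      · rintro (rfl | ⟨⟨hxm, hxA⟩, hcard⟩)
        · refine ⟨hmA, ?_⟩
          have h0 : A.filter (fun j => m < j) = ∅ :=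
            filter_eq_empty_iff.mpr fun y hy => not_lt.mpr (A.le_max' y hy)
          simp [h0]
        · have := hfilter x hxA hxm
          exact ⟨hxA, by omega⟩
    have hmn : m ∉ topk k (A.erase m) := fun h => (A.notMem_erase m) (topk_subset _ _ h)
    rw [hkey, card_insert_of_notMem hmn, ih (A.erase m) (erase_ssubset hmA) k,
      card_erase_of_mem hmA]
    have h1 : 1 ≤ A.card := card_pos.mpr hA
    omega

lemma remainder_subset (k : ℕ) {A B : Finset α} (h : A ⊆ B) :
    A \ topk k A ⊆ B \ topk k B := by
  intro x hx
  rw [mem_sdiff] at hx ⊢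
  obtain ⟨hxA, hxt⟩ := hx
  refine ⟨h hxA, fun hxB => hxt ?_⟩
  rw [topk, mem_filter] at hxB ⊢
  exact ⟨hxA, lt_of_le_of_lt (card_le_card (filter_subset_filter _ h)) hxB.2⟩

lemma chosen_card (acc : Finset α) (t : α → Option ρ) (qo : ℕ) (q : ρ → ℕ) (A : Finset α) :
    (oaChosen acc t qo q A).card
      = (oaOpen acc qo A).card + ∑ r, (oaRes acc t qo q r A).card := by
  rw [oaChosen, card_union_of_disjoint, card_biUnion]
  · intro r _ s _ hrs
    refine disjoint_left.mpr fun x hx hx' => ?_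
    have h1 := (mem_filter.mp (topk_subset _ _ hx)).2
    have h2 := (mem_filter.mp (topk_subset _ _ hx')).2
    rw [h1] at h2
    exact hrs (Option.some_injective _ h2)
  · refine disjoint_left.mpr fun x hx hx' => ?_
    rw [mem_biUnion] at hx'
    obtain ⟨r, _, hxr⟩ := hx'
    have hmem := topk_subset _ _ hxr
    rw [mem_filter] at hmem
    exact (mem_sdiff.mp hmem.1).2 hx

/-- The over-and-above choice rule is size monotonic (law of
aggregate demand): adding an individual to the set of applicants weakly
increases the number of chosen individuals. -/
theorem oa_size_monotonic
    (acc : Finset α) (t : α → Option ρ) (qo : ℕ) (q : ρ → ℕ)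
    (i : α) (A : Finset α) (hiA : i ∉ A) :
    (oaChosen acc t qo q A).card ≤ (oaChosen acc t qo q (insert i A)).card := by
  have hsub : A ∩ acc ⊆ insert i A ∩ acc :=
    inter_subset_inter (subset_insert i A) Subset.rfl
  rw [chosen_card, chosen_card]
  have hopen : (oaOpen acc qo A).card ≤ (oaOpen acc qo (insert i A)).card := by
    rw [oaOpen, oaOpen, topk_card, topk_card]
    exact min_le_min le_rfl (card_le_card hsub)
  have hres : ∀ r, (oaRes acc t qo q r A).card ≤ (oaRes acc t qo q r (insert i A)).card := by
    intro r
    rw [oaRes, oaRes, topk_card, topk_card]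
    refine min_le_min le_rfl (card_le_card (filter_subset_filter _ ?_))
    exact remainder_subset qo hsub
  exact add_le_add hopen (Finset.sum_le_sum fun r _ => hres r)
end

section
/- Example 2 (failure of the 'if' direction of the informal characterization in Sönmez and Yenmez (2022) under a literal reading of 'all positions have to be filled'): there exists an instance with one reserve category r, capacities q^o = 1 and q^r = 1, and two acceptable individuals i and j with t(i) = r, t(j) = GC, and i ≻ j, such that C^OA({i,j}) selects only i (assigning i the open position and leaving the category-r position unfilled), whereas the alternative categorized selection assigning j the open position and i the category-r position satisfies within-category fairness and disjointness of category selections and fills strictly more positions than C^OA({i,j}). -/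
open Finset

variable {α : Type*} [Fintype α] [DecidableEq α] [LinearOrder α]
variable {ρ : Type*} [Fintype ρ] [DecidableEq ρ]

/-- Example 2. An instance with one reserve category, one
open and one reserved position, and two acceptable individuals `1 ≻ 0` where
`1` has category `r` and `0` is a general-category individual.  The
over-and-above rule selects only `1` (for the open position, leaving the
category-`r` position unfilled), whereas the alternative categorized selection
giving `0` the open position and `1` the category-`r` position satisfies
within-category fairness and disjointness of category selections and fills
strictly more positions. -/
theorem example2_if_direction_fails :
    -- the over-and-above rule assigns the open position to `1` …
    oaOpen (α := Fin 2) Finset.univ 1 {0, 1} = {(1 : Fin 2)} ∧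
    -- … leaves the category-`r` position unfilled …
    oaRes (α := Fin 2) (ρ := Unit) Finset.univ
      (fun x => if x = 1 then some () else none) 1 (fun _ => 1) () {0, 1} = ∅ ∧
    -- … so it selects only `1` …
    oaChosen (α := Fin 2) (ρ := Unit) Finset.univ
      (fun x => if x = 1 then some () else none) 1 (fun _ => 1) {0, 1}
      = {(1 : Fin 2)} ∧
    -- … the alternative selection (open = {0}, category r = {1}) is a valid
    -- categorized selection from {0,1}: sizes within quotas, the reserved
    -- individual has category r, and the selections are disjoint …
    ({(0 : Fin 2)} : Finset (Fin 2)) ⊆ {0, 1} ∧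
    ({(1 : Fin 2)} : Finset (Fin 2)) ⊆ {0, 1} ∧
    ({(0 : Fin 2)} : Finset (Fin 2)).card ≤ 1 ∧
    ({(1 : Fin 2)} : Finset (Fin 2)).card ≤ 1 ∧
    (∀ i ∈ ({(1 : Fin 2)} : Finset (Fin 2)),
      (fun x : Fin 2 => if x = 1 then some () else (none : Option Unit)) i
        = some ()) ∧
    Disjoint ({(0 : Fin 2)} : Finset (Fin 2)) ({(1 : Fin 2)} : Finset (Fin 2)) ∧
    -- … it satisfies within-category fairness …
    (∀ i ∈ ({0, 1} : Finset (Fin 2)), ∀ j ∈ ({0, 1} : Finset (Fin 2)),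
      (fun x : Fin 2 => if x = 1 then some () else (none : Option Unit)) i
        = (fun x : Fin 2 => if x = 1 then some () else none) j →
      j < i →
      j ∈ ({(0 : Fin 2)} : Finset (Fin 2)) ∪ {(1 : Fin 2)} →
      i ∈ ({(0 : Fin 2)} : Finset (Fin 2)) ∪ {(1 : Fin 2)}) ∧
    -- … and it fills strictly more positions than the over-and-above rule.
    (oaChosen (α := Fin 2) (ρ := Unit) Finset.univ
        (fun x => if x = 1 then some () else none) 1 (fun _ => 1) {0, 1}).card
      < (({(0 : Fin 2)} : Finset (Fin 2)) ∪ {(1 : Fin 2)}).card := by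
  decide
end
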